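/- Let Φ be an infinite k-anemone of a limit-closed connectivity system. Then every nonempty proper union of petals of Φ has connectivity exactly k−1. -/

import Mathlib

open Set

/-- A symmetric set function: `λ(A) = λ(E \ A)`. -/
def SymmFn {E : Type*} (lam : Set E → ℕ∞) : Prop := ∀ A : Set E, lam Aᶜ = lam A

/-- A submodular set function: `λ(A) + λ(B) ≥ λ(A ∪ B) + λ(A ∩ B)`. -/
def SubmodularFn {E : Type*} (lam : Set E → ℕ∞) : Prop :=
  ∀ A B : Set E, lam (A ∪ B) + lam (A ∩ B) ≤ lam A + lam B

/-- A limit-closed set function: the union of a (nonempty) chain of sets of connectivity at most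
`k` again has connectivity at most `k`. -/
def LimitClosedFn {E : Type*} (lam : Set E → ℕ∞) : Prop :=
  ∀ (k : ℕ) (C : Set (Set E)), C.Nonempty → IsChain (· ⊆ ·) C →
    (∀ A ∈ C, lam A ≤ (k : ℕ∞)) → lam (⋃₀ C) ≤ (k : ℕ∞)

/-- `P` is a partition of the ground set into (indexed) nonempty pairwise disjoint classes. -/
def IsPartitionInd {E : Type*} {ι : Type*} (P : ι → Set E) : Prop :=
  (∀ i, (P i).Nonempty) ∧ (∀ i j, i ≠ j → Disjoint (P i) (P j)) ∧ (⋃ i, P i) = univ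

/-- A subset `J` of a cyclically ordered set is an interval if one cannot find a cyclically
alternating quadruple `a, b, c, d` with `a, c ∈ J` and `b, d ∉ J`. -/
def IsCyclicInterval {ι : Type*} (c : CircularOrder ι) (J : Set ι) : Prop :=
  ¬ ∃ a b x d : ι, a ∈ J ∧ x ∈ J ∧ b ∉ J ∧ d ∉ J ∧ c.sbtw a b x ∧ c.sbtw x d a

/-- A `k`-pseudoflower: a partition with cyclically ordered index set such that the union of
every interval of petals has connectivity at most `k - 1`. -/
def IsPseudoflower {E : Type*} {ι : Type*} (lam : Set E → ℕ∞) (k : ℕ)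
    (c : CircularOrder ι) (P : ι → Set E) : Prop :=
  IsPartitionInd P ∧
    ∀ J : Set ι, IsCyclicInterval c J → J.Nonempty → J ≠ univ →
      lam (⋃ i ∈ J, P i) ≤ ((k - 1 : ℕ) : ℕ∞)

/-- The canonical cyclic order on `Fin n`, coming from its linear order. -/
noncomputable def finCirc (n : ℕ) : CircularOrder (Fin n) := LinearOrder.toCircularOrder (Fin n)

/-- A finite `k`-anemone: a partition into at least four petals such that every union of a
nonempty proper subset of the petals has connectivity exactly `k - 1`. -/
def IsFinAnemone {E : Type*} (lam : Set E → ℕ∞) (k n : ℕ) (P : Fin n → Set E) : Prop :=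
  4 ≤ n ∧ IsPartitionInd P ∧
    ∀ T : Set (Fin n), T.Nonempty → T ≠ univ → lam (⋃ i ∈ T, P i) = ((k - 1 : ℕ) : ℕ∞)

/-- `f` exhibits the partition `Q` (cyclically ordered by `cQ`) as a concatenation of the
partition `P` (cyclically ordered by `cP`): each petal of `P` is contained in the corresponding
petal of `Q`, and preimages of intervals are intervals. -/
def IsConcatMap {E : Type*} {ι κ : Type*} (cP : CircularOrder ι) (cQ : CircularOrder κ)
    (P : ι → Set E) (Q : κ → Set E) (f : ι → κ) : Prop :=
  (∀ i, P i ⊆ Q (f i)) ∧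
    ∀ T : Set κ, IsCyclicInterval cQ T → IsCyclicInterval cP (f ⁻¹' T)

/-- A `k`-flower: a `k`-pseudoflower with at least four petals in which the union of every
nontrivial interval of petals has connectivity exactly `k - 1`. -/
def IsFlower {E : Type*} {ι : Type*} (lam : Set E → ℕ∞) (k : ℕ)
    (c : CircularOrder ι) (P : ι → Set E) : Prop :=
  IsPartitionInd P ∧ (∃ s : Finset ι, s.card = 4) ∧
    ∀ J : Set ι, IsCyclicInterval c J → J.Nonempty → J ≠ univ →
      lam (⋃ i ∈ J, P i) = ((k - 1 : ℕ) : ℕ∞)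

/-- A `k`-anemone: a `k`-flower all of whose finite concatenations have all of their nontrivial
unions of petals of connectivity exactly `k - 1`. -/
def IsAnemone {E : Type*} {ι : Type*} (lam : Set E → ℕ∞) (k : ℕ)
    (c : CircularOrder ι) (P : ι → Set E) : Prop :=
  IsFlower lam k c P ∧
    ∀ (m : ℕ) (f : ι → Fin m), Function.Surjective f →
      (∀ T : Set (Fin m), IsCyclicInterval (finCirc m) T → IsCyclicInterval c (f ⁻¹' T)) →
      ∀ T : Set (Fin m), T.Nonempty → T ≠ univ →
        lam (⋃ i ∈ f ⁻¹' T, P i) = ((k - 1 : ℕ) : ℕ∞)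


/-! ### Auxiliary lemmas -/

section CircTools

variable {ι : Type*} [inst : CircularOrder ι]

lemma my_sbtw_ne_left {a b c : ι} (h : sbtw a b c) : a ≠ b := by
  rintro rfl; exact sbtw_irrefl_left h

lemma my_sbtw_ne_right {a b c : ι} (h : sbtw a b c) : b ≠ c := by
  rintro rfl; exact sbtw_irrefl_right h

lemma my_sbtw_ne_outer {a b c : ι} (h : sbtw a b c) : a ≠ c := by
  rintro rfl; exact sbtw_irrefl_left_right h

lemma my_sbtw_total {a b c : ι} (hab : a ≠ b) (hbc : b ≠ c) (hac : a ≠ c) :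
    sbtw a b c ∨ sbtw c b a := by
  rcases btw_total a b c with h | h
  · by_cases h' : btw c b a
    · rcases h.antisymm h' with h'' | h'' | h'' <;> simp_all
    · exact Or.inl (sbtw_of_btw_not_btw h h')
  · by_cases h' : btw a b c
    · rcases h'.antisymm h with h'' | h'' | h'' <;> simp_all
    · exact Or.inr (sbtw_of_btw_not_btw h h')

/-- right extension: `d ∈ (a,p)`, `p ∈ (a,b)` imply `d ∈ (a,b)`. -/
lemma my_sbtw_ext {a d p b : ι} (h1 : sbtw a d p) (h2 : sbtw a p b) : sbtw a d b := by
  have h1' : sbtw d p a := h1.cyclic_left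
  have h2' : sbtw p b a := h2.cyclic_left
  have := h1'.trans_left h2'
  exact this.cyclic_left.cyclic_left

lemma ci_empty : IsCyclicInterval inst (∅ : Set ι) := by
  rintro ⟨p, q, x, d, hp, -⟩; exact hp

lemma ci_univ : IsCyclicInterval inst (univ : Set ι) := by
  rintro ⟨p, q, x, d, -, -, hq, -⟩; exact hq (mem_univ q)

lemma ci_singleton (a : ι) : IsCyclicInterval inst {a} := by
  rintro ⟨p, q, x, d, hp, hx, -, -, h1, -⟩
  rw [mem_singleton_iff] at hp hx
  subst hp; subst hx
  exact sbtw_irrefl_left_right h1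

lemma ci_compl {J : Set ι} (hJ : IsCyclicInterval inst J) : IsCyclicInterval inst Jᶜ := by
  rintro ⟨p, q, x, d, hp, hx, hq, hd, h1, h2⟩
  rw [mem_compl_iff, not_not] at hq hd
  refine hJ ⟨q, x, d, p, hq, hd, hx, hp, ?_, ?_⟩
  · -- sbtw q x d
    by_contra hcon
    have hqd : q ≠ d := by
      rintro rfl; exact sbtw_asymm h1 h2
    have hbtw : btw d x q := by
      by_contra hnb
      rcases btw_total q x d with h | h
      · exact hcon (sbtw_of_btw_not_btw h hnb)
      · exact hnb h
    have hsb : sbtw d x q := by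
      refine sbtw_of_btw_not_btw hbtw (fun h' => ?_)
      rcases h'.antisymm hbtw with h'' | h'' | h''
      · exact my_sbtw_ne_right h1 h''
      · exact my_sbtw_ne_left h2 h''
      · exact hqd h''.symm
    have : sbtw q d x := hsb.cyclic_left.cyclic_left
    have : sbtw p d x := h1.trans_left this
    exact sbtw_asymm this h2
  · -- sbtw d p q
    by_contra hcon
    have hqd : q ≠ d := by
      rintro rfl; exact sbtw_asymm h1 h2
    have hbtw : btw q p d := by
      by_contra hnb
      rcases btw_total d p q with h | h
      · exact hcon (sbtw_of_btw_not_btw h hnb)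
      · exact hnb h
    have hsb : sbtw q p d := by
      refine sbtw_of_btw_not_btw hbtw (fun h' => ?_)
      rcases h'.antisymm hbtw with h'' | h'' | h''
      · exact my_sbtw_ne_right h2 h''
      · exact my_sbtw_ne_left h1 h''
      · exact hqd h''
    have : sbtw d q p := hsb.cyclic_left.cyclic_left
    have : sbtw x q p := h2.trans_left this
    exact sbtw_asymm this h1

/-- Master lemma: any set squeezed between an open arc and the corresponding closed arc is a
cyclic interval. -/
lemma ci_arc {a b : ι} (hab : a ≠ b) {J : Set ι}
    (h1 : {z | sbtw a z b} ⊆ J) (h2 : J ⊆ {z | btw a z b}) :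
    IsCyclicInterval inst J := by
  rintro ⟨p, q, x, d, hpJ, hxJ, hqJ, hdJ, hpqx, hxdp⟩
  have hq' : ¬ sbtw a q b := fun h => hqJ (h1 h)
  have hd' : ¬ sbtw a d b := fun h => hdJ (h1 h)
  have hbp : btw a p b := h2 hpJ
  have hbx : btw a x b := h2 hxJ
  have hpx : p ≠ x := my_sbtw_ne_outer hpqx
  have classify : ∀ z, btw a z b → z = a ∨ z = b ∨ sbtw a z b := by
    intro z hz
    by_cases h3 : z = a
    · exact Or.inl h3
    by_cases h4 : z = b
    · exact Or.inr (Or.inl h4)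
    refine Or.inr (Or.inr (sbtw_of_btw_not_btw hz (fun h' => ?_)))
    rcases hz.antisymm h' with h'' | h'' | h''
    · exact h3 h''.symm
    · exact h4 h''
    · exact hab h''.symm
  rcases classify p hbp with rfl | rfl | hpi
  · rcases classify x hbx with rfl | rfl | hxi
    · exact hpx rfl
    · exact hq' hpqx
    · exact hq' (my_sbtw_ext hpqx hxi)
  · rcases classify x hbx with rfl | rfl | hxi
    · exact hd' hxdp
    · exact hpx rfl
    · exact hd' (hxi.trans_left hxdp)
  · rcases classify x hbx with rfl | rfl | hxi
    · exact hd' (my_sbtw_ext hxdp hpi)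
    · exact hq' (hpi.trans_left hpqx)
    · have hpb : p ≠ b := my_sbtw_ne_right hpi
      have hxb : x ≠ b := my_sbtw_ne_right hxi
      have hax : a ≠ x := my_sbtw_ne_left hxi
      have hap : a ≠ p := my_sbtw_ne_left hpi
      rcases my_sbtw_total hpx hxb hpb with h | h
      · exact hq' (hpi.trans_left (my_sbtw_ext hpqx h))
      · have haxp : sbtw a x p := by
          rcases my_sbtw_total hax hpx.symm hap with h' | h'
          · exact h'
          · exfalso
            have h1' : sbtw a p x := h'.cyclic_left.cyclic_left
            have h2' : sbtw p b x := h.cyclic_left.cyclic_left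
            exact sbtw_asymm (h1'.trans_left h2') hxi.cyclic_left
        exact hd' (my_sbtw_ext (haxp.trans_left hxdp) hpi)

end CircTools

section MainAux

variable {E : Type*} {ι : Type*}

lemma part_inter {P : ι → Set E} (hpart : IsPartitionInd P) (S T : Set ι) :
    (⋃ i ∈ S, P i) ∩ (⋃ i ∈ T, P i) = ⋃ i ∈ S ∩ T, P i := by
  ext z
  simp only [mem_inter_iff, mem_iUnion, exists_prop]
  constructor
  · rintro ⟨⟨i, hiS, hzi⟩, ⟨j, hjT, hzj⟩⟩
    have hij : i = j := by
      by_contra hne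
      exact absurd hzj (Set.disjoint_left.mp (hpart.2.1 i j hne) hzi)
    subst hij
    exact ⟨i, ⟨hiS, hjT⟩, hzi⟩
  · rintro ⟨i, ⟨hiS, hiT⟩, hzi⟩
    exact ⟨⟨i, hiS, hzi⟩, ⟨i, hiT, hzi⟩⟩

lemma pair_aux [Infinite ι] {lam : Set E → ℕ∞} {k : ℕ} {c : CircularOrder ι}
    {P : ι → Set E} (hP : IsAnemone lam k c P) {a b : ι} (hab : a ≠ b)
    (hU : ({z | c.sbtw a z b} : Set ι).Nonempty) :
    lam (P a ∪ P b) = ((k - 1 : ℕ) : ℕ∞) := by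
  letI := c
  classical
  have hdisj : ∀ z, sbtw a z b → sbtw b z a → False := fun z h h' =>
    (not_btw_of_sbtw h) (btw_of_sbtw h')
  by_cases hV : ({z | sbtw b z a} : Set ι).Nonempty
  · -- four blocks: {a}, (a,b), {b}, (b,a)
    set f : ι → Fin 4 := fun z => if z = a then 0 else if z = b then 2 else
      if sbtw a z b then 1 else 3 with hfdef
    have hp0 : f ⁻¹' {0} = {a} := by
      ext z
      simp only [mem_preimage, mem_singleton_iff, f]
      split_ifs with h1 h2 h3
      · exact iff_of_true rfl h1
      · exact iff_of_false (by decide) h1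
      · exact iff_of_false (by decide) h1
      · exact iff_of_false (by decide) h1
    have hp1 : f ⁻¹' {1} = {z | sbtw a z b} := by
      ext z
      simp only [mem_preimage, mem_singleton_iff, mem_setOf_eq, f]
      split_ifs with h1 h2 h3
      · exact iff_of_false (by decide) (by rw [h1]; exact sbtw_irrefl_left)
      · exact iff_of_false (by decide) (by rw [h2]; exact sbtw_irrefl_right)
      · exact iff_of_true rfl h3
      · exact iff_of_false (by decide) h3
    have hp2 : f ⁻¹' {2} = {b} := by
      ext z
      simp only [mem_preimage, mem_singleton_iff, f]
      split_ifs with h1 h2 h3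
      · exact iff_of_false (by decide) (fun h => hab (h1.symm.trans h))
      · exact iff_of_true rfl h2
      · exact iff_of_false (by decide) h2
      · exact iff_of_false (by decide) h2
    have hp3 : f ⁻¹' {3} = {z | sbtw b z a} := by
      ext z
      simp only [mem_preimage, mem_singleton_iff, mem_setOf_eq, f]
      split_ifs with h1 h2 h3
      · exact iff_of_false (by decide) (by rw [h1]; exact sbtw_irrefl_right)
      · exact iff_of_false (by decide) (by rw [h2]; exact sbtw_irrefl_left)
      · exact iff_of_false (by decide) (fun h => hdisj z h3 h)
      · refine iff_of_true rfl ?_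
        rcases my_sbtw_total (show b ≠ z from fun h => h2 h.symm) (show z ≠ a from h1)
          hab.symm with h | h
        · exact h
        · exact absurd h h3
    have hsurj : Function.Surjective f := by
      intro y
      rcases (by decide : ∀ y : Fin 4, y = 0 ∨ y = 1 ∨ y = 2 ∨ y = 3) y with rfl | rfl | rfl | rfl
      · exact ⟨a, by simp [f]⟩
      · obtain ⟨u, hu⟩ := hU
        have hu' : sbtw a u b := hu
        exact ⟨u, by simp [f, Ne.symm (my_sbtw_ne_left hu'), my_sbtw_ne_right hu', hu']⟩
      · exact ⟨b, by simp [f, Ne.symm hab]⟩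
      · obtain ⟨v, hv⟩ := hV
        have hv' : sbtw b v a := hv
        have hnv : ¬ sbtw a v b := fun h => hdisj v h hv'
        exact ⟨v, by simp [f, my_sbtw_ne_right hv', Ne.symm (my_sbtw_ne_left hv'), hnv]⟩
    have key : ∀ T : Set (Fin 4), IsCyclicInterval (finCirc 4) T → (0 : Fin 4) ∉ T →
        IsCyclicInterval c (f ⁻¹' T) := by
      intro T hT h0
      by_cases h1 : (1 : Fin 4) ∈ T <;> by_cases h2 : (2 : Fin 4) ∈ T <;>
        by_cases h3 : (3 : Fin 4) ∈ T
      · -- T = {1,2,3} = {0}ᶜ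
        have hTeq : T = ({0} : Set (Fin 4))ᶜ := by
          ext i
          rcases (by decide : ∀ y : Fin 4, y = 0 ∨ y = 1 ∨ y = 2 ∨ y = 3) i
            with rfl | rfl | rfl | rfl <;>
            simp only [mem_compl_iff, mem_singleton_iff] <;>
            first
              | (exact iff_of_false h0 (by simp))
              | (exact iff_of_true (by assumption) (by decide))
        rw [hTeq, preimage_compl, hp0]
        exact @ci_compl ι c _ (@ci_singleton ι c a)
      · -- T = {1,2}
        have hTeq : T = ({1, 2} : Set (Fin 4)) := by
          ext i
          rcases (by decide : ∀ y : Fin 4, y = 0 ∨ y = 1 ∨ y = 2 ∨ y = 3) i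
            with rfl | rfl | rfl | rfl <;>
            simp only [mem_insert_iff, mem_singleton_iff] <;>
            first
              | (exact iff_of_false (by assumption) (by decide))
              | (exact iff_of_true (by assumption) (by decide))
        rw [hTeq, insert_eq, preimage_union, hp1, hp2]
        refine @ci_arc ι c a b hab _ subset_union_left (union_subset ?_ ?_)
        · exact fun z hz => btw_of_sbtw hz
        · intro z hz
          rw [mem_singleton_iff] at hz
          subst hz
          exact btw_rfl_right
      · -- T = {1,3} : not an interval
        exact absurd hT (fun hT' => hT' ⟨1, 2, 3, 0, h1, h3, h2, h0,
          Or.inl ⟨by decide, by decide⟩, Or.inr (Or.inl ⟨by decide, by decide⟩)⟩)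
      · -- T = {1}
        have hTeq : T = ({1} : Set (Fin 4)) := by
          ext i
          rcases (by decide : ∀ y : Fin 4, y = 0 ∨ y = 1 ∨ y = 2 ∨ y = 3) i
            with rfl | rfl | rfl | rfl <;>
            simp only [mem_singleton_iff] <;>
            first
              | (exact iff_of_false (by assumption) (by decide))
              | (exact iff_of_true (by assumption) (by decide))
        rw [hTeq, hp1]
        exact @ci_arc ι c a b hab _ subset_rfl (fun z hz => btw_of_sbtw hz)
      · -- T = {2,3}
        have hTeq : T = ({2, 3} : Set (Fin 4)) := by
          ext i
          rcases (by decide : ∀ y : Fin 4, y = 0 ∨ y = 1 ∨ y = 2 ∨ y = 3) i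
            with rfl | rfl | rfl | rfl <;>
            simp only [mem_insert_iff, mem_singleton_iff] <;>
            first
              | (exact iff_of_false (by assumption) (by decide))
              | (exact iff_of_true (by assumption) (by decide))
        rw [hTeq, insert_eq, preimage_union, hp2, hp3]
        refine @ci_arc ι c b a hab.symm _ subset_union_right (union_subset ?_ ?_)
        · intro z hz
          rw [mem_singleton_iff] at hz
          subst hz
          exact btw_rfl_left
        · exact fun z hz => btw_of_sbtw hz
      · -- T = {2}
        have hTeq : T = ({2} : Set (Fin 4)) := by
          ext i
          rcases (by decide : ∀ y : Fin 4, y = 0 ∨ y = 1 ∨ y = 2 ∨ y = 3) i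
            with rfl | rfl | rfl | rfl <;>
            simp only [mem_singleton_iff] <;>
            first
              | (exact iff_of_false (by assumption) (by decide))
              | (exact iff_of_true (by assumption) (by decide))
        rw [hTeq, hp2]
        exact @ci_singleton ι c b
      · -- T = {3}
        have hTeq : T = ({3} : Set (Fin 4)) := by
          ext i
          rcases (by decide : ∀ y : Fin 4, y = 0 ∨ y = 1 ∨ y = 2 ∨ y = 3) i
            with rfl | rfl | rfl | rfl <;>
            simp only [mem_singleton_iff] <;>
            first
              | (exact iff_of_false (by assumption) (by decide))
              | (exact iff_of_true (by assumption) (by decide))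
        rw [hTeq, hp3]
        exact @ci_arc ι c b a hab.symm _ subset_rfl (fun z hz => btw_of_sbtw hz)
      · -- T = ∅
        have hTeq : T = (∅ : Set (Fin 4)) := by
          ext i
          rcases (by decide : ∀ y : Fin 4, y = 0 ∨ y = 1 ∨ y = 2 ∨ y = 3) i
            with rfl | rfl | rfl | rfl <;>
            exact iff_of_false (by assumption) (notMem_empty _)
        rw [hTeq, preimage_empty]
        exact @ci_empty ι c
    have hconc : ∀ T : Set (Fin 4), IsCyclicInterval (finCirc 4) T →
        IsCyclicInterval c (f ⁻¹' T) := by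
      intro T hT
      by_cases h0 : (0 : Fin 4) ∈ T
      · have hTc := key Tᶜ (@ci_compl (Fin 4) (finCirc 4) T hT) (by simp [h0])
        rw [preimage_compl] at hTc
        have := @ci_compl ι c _ hTc
        rwa [compl_compl] at this
      · exact key T hT h0
    have hmain := hP.2 4 f hsurj hconc {0, 2} ⟨0, Or.inl rfl⟩ (by
      intro h
      have h1 : (1 : Fin 4) ∈ ({0, 2} : Set (Fin 4)) := h.symm ▸ mem_univ _
      simp only [mem_insert_iff, mem_singleton_iff] at h1
      exact (by decide : ¬ ((1 : Fin 4) = 0 ∨ (1 : Fin 4) = 2)) h1)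
    rw [show ({0, 2} : Set (Fin 4)) = {0} ∪ {2} from insert_eq 0 {2},
      preimage_union, hp0, hp2, biUnion_union, biUnion_singleton, biUnion_singleton] at hmain
    exact hmain
  · -- three blocks: {a}, (a,b), {b}
    have hVall : ∀ z, ¬ sbtw b z a := fun z hz => hV ⟨z, hz⟩
    set f : ι → Fin 3 := fun z => if z = a then 0 else if z = b then 2 else 1 with hfdef
    have hp0 : f ⁻¹' {0} = {a} := by
      ext z
      simp only [mem_preimage, mem_singleton_iff, f]
      split_ifs with h1 h2
      · exact iff_of_true rfl h1
      · exact iff_of_false (by decide) h1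
      · exact iff_of_false (by decide) h1
    have hp1 : f ⁻¹' {1} = {z | sbtw a z b} := by
      ext z
      simp only [mem_preimage, mem_singleton_iff, mem_setOf_eq, f]
      split_ifs with h1 h2
      · exact iff_of_false (by decide) (by rw [h1]; exact sbtw_irrefl_left)
      · exact iff_of_false (by decide) (by rw [h2]; exact sbtw_irrefl_right)
      · refine iff_of_true rfl ?_
        rcases my_sbtw_total (show a ≠ z from fun h => h1 h.symm) (show z ≠ b from h2)
          hab with h | h
        · exact h
        · exact absurd h (hVall z)
    have hp2 : f ⁻¹' {2} = {b} := by
      ext z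
      simp only [mem_preimage, mem_singleton_iff, f]
      split_ifs with h1 h2
      · exact iff_of_false (by decide) (fun h => hab (h1.symm.trans h))
      · exact iff_of_true rfl h2
      · exact iff_of_false (by decide) h2
    have hsurj : Function.Surjective f := by
      intro y
      rcases (by decide : ∀ y : Fin 3, y = 0 ∨ y = 1 ∨ y = 2) y with rfl | rfl | rfl
      · exact ⟨a, by simp [f]⟩
      · obtain ⟨u, hu⟩ := hU
        have hu' : sbtw a u b := hu
        exact ⟨u, by simp [f, Ne.symm (my_sbtw_ne_left hu'), my_sbtw_ne_right hu']⟩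
      · exact ⟨b, by simp [f, Ne.symm hab]⟩
    have key : ∀ T : Set (Fin 3), IsCyclicInterval (finCirc 3) T → (0 : Fin 3) ∉ T →
        IsCyclicInterval c (f ⁻¹' T) := by
      intro T hT h0
      by_cases h1 : (1 : Fin 3) ∈ T <;> by_cases h2 : (2 : Fin 3) ∈ T
      · have hTeq : T = ({1, 2} : Set (Fin 3)) := by
          ext i
          rcases (by decide : ∀ y : Fin 3, y = 0 ∨ y = 1 ∨ y = 2) i with rfl | rfl | rfl <;>
            simp only [mem_insert_iff, mem_singleton_iff] <;>
            first
              | (exact iff_of_false (by assumption) (by decide))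
              | (exact iff_of_true (by assumption) (by decide))
        rw [hTeq, insert_eq, preimage_union, hp1, hp2]
        refine @ci_arc ι c a b hab _ subset_union_left (union_subset ?_ ?_)
        · exact fun z hz => btw_of_sbtw hz
        · intro z hz
          rw [mem_singleton_iff] at hz
          subst hz
          exact btw_rfl_right
      · have hTeq : T = ({1} : Set (Fin 3)) := by
          ext i
          rcases (by decide : ∀ y : Fin 3, y = 0 ∨ y = 1 ∨ y = 2) i with rfl | rfl | rfl <;>
            simp only [mem_singleton_iff] <;>
            first
              | (exact iff_of_false (by assumption) (by decide))
              | (exact iff_of_true (by assumption) (by decide))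
        rw [hTeq, hp1]
        exact @ci_arc ι c a b hab _ subset_rfl (fun z hz => btw_of_sbtw hz)
      · have hTeq : T = ({2} : Set (Fin 3)) := by
          ext i
          rcases (by decide : ∀ y : Fin 3, y = 0 ∨ y = 1 ∨ y = 2) i with rfl | rfl | rfl <;>
            simp only [mem_singleton_iff] <;>
            first
              | (exact iff_of_false (by assumption) (by decide))
              | (exact iff_of_true (by assumption) (by decide))
        rw [hTeq, hp2]
        exact @ci_singleton ι c b
      · have hTeq : T = (∅ : Set (Fin 3)) := by
          ext i
          rcases (by decide : ∀ y : Fin 3, y = 0 ∨ y = 1 ∨ y = 2) i with rfl | rfl | rfl <;>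
            exact iff_of_false (by assumption) (notMem_empty _)
        rw [hTeq, preimage_empty]
        exact @ci_empty ι c
    have hconc : ∀ T : Set (Fin 3), IsCyclicInterval (finCirc 3) T →
        IsCyclicInterval c (f ⁻¹' T) := by
      intro T hT
      by_cases h0 : (0 : Fin 3) ∈ T
      · have hTc := key Tᶜ (@ci_compl (Fin 3) (finCirc 3) T hT) (by simp [h0])
        rw [preimage_compl] at hTc
        have := @ci_compl ι c _ hTc
        rwa [compl_compl] at this
      · exact key T hT h0
    have hmain := hP.2 3 f hsurj hconc {0, 2} ⟨0, Or.inl rfl⟩ (by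
      intro h
      have h1 : (1 : Fin 3) ∈ ({0, 2} : Set (Fin 3)) := h.symm ▸ mem_univ _
      simp only [mem_insert_iff, mem_singleton_iff] at h1
      exact (by decide : ¬ ((1 : Fin 3) = 0 ∨ (1 : Fin 3) = 2)) h1)
    rw [show ({0, 2} : Set (Fin 3)) = {0} ∪ {2} from insert_eq 0 {2},
      preimage_union, hp0, hp2, biUnion_union, biUnion_singleton, biUnion_singleton] at hmain
    exact hmain

end MainAux

/-- In an infinite `k`-anemone, every nonempty proper union of petals has connectivity
exactly `k - 1`. -/
theorem stmt9 {E : Type*} {ι : Type*} [Infinite ι] (lam : Set E → ℕ∞)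
    (hsym : SymmFn lam) (hsub : SubmodularFn lam) (hlim : LimitClosedFn lam)
    (k : ℕ) (hk : 1 ≤ k) (c : CircularOrder ι) (P : ι → Set E)
    (hP : IsAnemone lam k c P)
    (J : Set ι) (hJne : J.Nonempty) (hJpr : J ≠ univ) :
    lam (⋃ i ∈ J, P i) = ((k - 1 : ℕ) : ℕ∞) := by
  classical
  obtain ⟨hfl, hconcat⟩ := hP
  have hpart := hfl.1
  have hflow := hfl.2.2
  have hKtop : ((k - 1 : ℕ) : ℕ∞) ≠ ⊤ := by exact_mod_cast WithTop.coe_ne_top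
  have hex2 : ∀ u v : ι, ∃ z : ι, z ≠ u ∧ z ≠ v := by
    intro u v
    obtain ⟨z, hz⟩ := Infinite.exists_notMem_finset ({u, v} : Finset ι)
    simp only [Finset.mem_insert, Finset.mem_singleton] at hz
    push_neg at hz
    exact ⟨z, hz⟩
  have hsingle_ne : ∀ a : ι, ({a} : Set ι) ≠ univ := by
    intro a h
    obtain ⟨z, hz, -⟩ := hex2 a a
    exact hz (by rw [← mem_singleton_iff, h]; exact mem_univ z)
  have hpetal : ∀ a : ι, lam (P a) = ((k - 1 : ℕ) : ℕ∞) := by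
    intro a
    have h := hflow {a} (@ci_singleton ι c a) ⟨a, rfl⟩ (hsingle_ne a)
    rwa [biUnion_singleton] at h
  have hcos : ∀ b : ι, lam (⋃ i ∈ ({b}ᶜ : Set ι), P i) = ((k - 1 : ℕ) : ℕ∞) := by
    intro b
    obtain ⟨z, hz, -⟩ := hex2 b b
    refine hflow {b}ᶜ (@ci_compl ι c _ (@ci_singleton ι c b)) ⟨z, hz⟩ ?_
    intro h
    have hb : b ∈ ({b}ᶜ : Set ι) := by rw [h]; exact mem_univ b
    exact hb rfl
  have hpair : ∀ a b : ι, a ≠ b → lam (P a ∪ P b) = ((k - 1 : ℕ) : ℕ∞) := by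
    intro a b hab
    obtain ⟨z, hza, hzb⟩ := hex2 a b
    rcases @my_sbtw_total ι c a z b (Ne.symm hza) hzb hab with h | h
    · exact pair_aux ⟨hfl, hconcat⟩ hab ⟨z, h⟩
    · rw [union_comm]
      exact pair_aux ⟨hfl, hconcat⟩ hab.symm ⟨z, h⟩
  -- upper bound via Zorn's lemma and limit-closedness
  have hub : ∀ S : Set ι, S.Nonempty → lam (⋃ i ∈ S, P i) ≤ ((k - 1 : ℕ) : ℕ∞) := by
    rintro S ⟨a0, ha0⟩
    set G : Set (Set ι) := {M | M ⊆ S ∧ a0 ∈ M ∧ lam (⋃ i ∈ M, P i) ≤ ((k - 1 : ℕ) : ℕ∞)}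
      with hGdef
    have hchains : ∀ ch ⊆ G, IsChain (· ⊆ ·) ch → ch.Nonempty →
        ∃ ub ∈ G, ∀ s ∈ ch, s ⊆ ub := by
      intro ch hchS hchC hchNe
      refine ⟨⋃₀ ch, ⟨sUnion_subset fun t ht => (hchS ht).1, ?_, ?_⟩,
        fun s hs => subset_sUnion_of_mem hs⟩
      · obtain ⟨t, ht⟩ := hchNe
        exact mem_sUnion.mpr ⟨t, ht, (hchS ht).2.1⟩
      · have hchainIm : IsChain (· ⊆ ·) ((fun M : Set ι => ⋃ i ∈ M, P i) '' ch) :=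
          IsChain.image_of_map_rel (· ⊆ ·) (· ⊆ ·) (fun M : Set ι => ⋃ i ∈ M, P i)
            (fun x y hxy => biUnion_subset_biUnion_left hxy) hchC
        have hNeIm : ((fun M : Set ι => ⋃ i ∈ M, P i) '' ch).Nonempty := hchNe.image _
        have hbound : ∀ A ∈ (fun M : Set ι => ⋃ i ∈ M, P i) '' ch,
            lam A ≤ ((k - 1 : ℕ) : ℕ∞) := by
          rintro A ⟨M, hM, rfl⟩
          exact (hchS hM).2.2
        have hlim' := hlim (k - 1) ((fun M : Set ι => ⋃ i ∈ M, P i) '' ch)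
          hNeIm hchainIm hbound
        have heq : ⋃₀ ((fun M : Set ι => ⋃ i ∈ M, P i) '' ch) = ⋃ i ∈ ⋃₀ ch, P i := by
          ext z
          simp only [mem_sUnion, mem_image, mem_iUnion, exists_prop]
          constructor
          · rintro ⟨A, ⟨M, hM, rfl⟩, hz⟩
            simp only [mem_iUnion, exists_prop] at hz
            obtain ⟨i, hiM, hzi⟩ := hz
            exact ⟨i, ⟨M, hM, hiM⟩, hzi⟩
          · rintro ⟨i, ⟨M, hM, hiM⟩, hz⟩
            exact ⟨⋃ i ∈ M, P i, ⟨M, hM, rfl⟩, by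
              simp only [mem_iUnion, exists_prop]; exact ⟨i, hiM, hz⟩⟩
        rwa [heq] at hlim'
    have hbase : ({a0} : Set ι) ∈ G := by
      refine ⟨singleton_subset_iff.mpr ha0, rfl, ?_⟩
      rw [biUnion_singleton]
      exact (hpetal a0).le
    obtain ⟨M, hM0, hMmax⟩ := zorn_subset_nonempty G hchains {a0} hbase
    have hMG : M ∈ G := hMmax.1
    by_cases hSM : S ⊆ M
    · have : M = S := Subset.antisymm hMG.1 hSM
      rw [← this]
      exact hMG.2.2
    · exfalso
      obtain ⟨j, hjS, hjM⟩ := not_subset.mp hSM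
      have ha0M : a0 ∈ M := hMG.2.1
      have haj : a0 ≠ j := fun h => hjM (h ▸ ha0M)
      have hPa0 : P a0 ⊆ ⋃ i ∈ M, P i := subset_biUnion_of_mem ha0M
      have hUeq : (⋃ i ∈ M, P i) ∪ (P a0 ∪ P j) = ⋃ i ∈ insert j M, P i := by
        rw [biUnion_insert]
        ext z
        simp only [mem_union]
        constructor
        · rintro (h | h | h)
          · exact Or.inr h
          · exact Or.inr (hPa0 h)
          · exact Or.inl h
        · rintro (h | h)
          · exact Or.inr (Or.inr h)
          · exact Or.inl h
      have hIeq : (⋃ i ∈ M, P i) ∩ (P a0 ∪ P j) = P a0 := by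
        have h1 : P a0 ∪ P j = ⋃ i ∈ ({a0, j} : Set ι), P i := by
          rw [biUnion_insert, biUnion_singleton]
        rw [h1, part_inter hpart]
        have h2 : M ∩ ({a0, j} : Set ι) = {a0} := by
          ext z
          simp only [mem_inter_iff, mem_insert_iff, mem_singleton_iff]
          constructor
          · rintro ⟨hzM, rfl | rfl⟩
            · rfl
            · exact absurd hzM hjM
          · rintro rfl
            exact ⟨ha0M, Or.inl rfl⟩
        rw [h2, biUnion_singleton]
      have hsm := hsub (⋃ i ∈ M, P i) (P a0 ∪ P j)
      rw [hUeq, hIeq, hpetal a0] at hsm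
      have hsm2 : lam (⋃ i ∈ insert j M, P i) + ((k - 1 : ℕ) : ℕ∞) ≤
          ((k - 1 : ℕ) : ℕ∞) + ((k - 1 : ℕ) : ℕ∞) :=
        hsm.trans (add_le_add hMG.2.2 (hpair a0 j haj).le)
      have hstep : lam (⋃ i ∈ insert j M, P i) ≤ ((k - 1 : ℕ) : ℕ∞) :=
        (WithTop.add_le_add_iff_right hKtop).mp hsm2
      have hins : insert j M ∈ G :=
        ⟨insert_subset_iff.mpr ⟨hjS, hMG.1⟩, mem_insert_of_mem j ha0M, hstep⟩
      exact hjM (hMmax.2 hins (subset_insert j M) (mem_insert j M))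
  -- lower bound via submodularity
  obtain ⟨a, haJ⟩ := hJne
  obtain ⟨b, hbJ⟩ : ∃ b : ι, b ∉ J := by
    by_contra h
    push_neg at h
    exact hJpr (eq_univ_of_forall h)
  set Y : Set ι := {a} ∪ (Jᶜ \ {b}) with hYdef
  have hYne : Y.Nonempty := ⟨a, Or.inl rfl⟩
  have hYle := hub Y hYne
  have hJYu : J ∪ Y = ({b}ᶜ : Set ι) := by
    ext z
    simp only [hYdef, mem_union, mem_singleton_iff, mem_diff, mem_compl_iff]
    constructor
    · rintro (h | h | h)
      · exact fun h' => hbJ (h' ▸ h)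
      · exact fun h' => hbJ ((h ▸ h' : a = b) ▸ haJ)
      · exact h.2
    · intro hz
      by_cases hzJ : z ∈ J
      · exact Or.inl hzJ
      · exact Or.inr (Or.inr ⟨hzJ, hz⟩)
  have hJYi : J ∩ Y = ({a} : Set ι) := by
    ext z
    simp only [hYdef, mem_inter_iff, mem_union, mem_singleton_iff, mem_diff, mem_compl_iff]
    constructor
    · rintro ⟨hzJ, rfl | ⟨hzJc, -⟩⟩
      · rfl
      · exact absurd hzJ hzJc
    · rintro rfl
      exact ⟨haJ, Or.inl rfl⟩
  have hsm := hsub (⋃ i ∈ J, P i) (⋃ i ∈ Y, P i)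
  rw [← biUnion_union, hJYu, part_inter hpart, hJYi, biUnion_singleton, hcos b,
    hpetal a] at hsm
  have hsm2 : ((k - 1 : ℕ) : ℕ∞) + ((k - 1 : ℕ) : ℕ∞) ≤
      lam (⋃ i ∈ J, P i) + ((k - 1 : ℕ) : ℕ∞) :=
    hsm.trans (add_le_add le_rfl hYle)
  have hge : ((k - 1 : ℕ) : ℕ∞) ≤ lam (⋃ i ∈ J, P i) :=
    (WithTop.add_le_add_iff_right hKtop).mp hsm2
  exact le_antisymm (hub J ⟨a, haJ⟩) hge
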